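/- arXiv:2004.13417 — 7 statements merged into one kernel-verified Lean document; each statement's English description precedes it below -/
import Mathlib

section
/- For any nonzero vector a ∈ ℝ^n, any b ∈ ℝ and any δ > 0, the gradient of h_δ(·; a, b) is Lipschitz continuous with constant ‖a‖/(2δ): for all x, y ∈ ℝ^n, ‖∇h_δ(x; a, b) − ∇h_δ(y; a, b)‖ ≤ (‖a‖/(2δ)) ‖x − y‖. -/
open scoped RealInnerProductSpace

/-- The one-sided Huber penalty `h_δ(x; a, b)`. -/
noncomputable def huber {n : ℕ} (δ : ℝ) (a : EuclideanSpace ℝ (Fin n)) (b : ℝ)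
    (x : EuclideanSpace ℝ (Fin n)) : ℝ :=
  if δ < ⟪a, x⟫ - b then (⟪a, x⟫ - b) / ‖a‖
  else if -δ ≤ ⟪a, x⟫ - b then (⟪a, x⟫ - b + δ) ^ 2 / (4 * δ * ‖a‖)
  else 0

lemma hasDerivAt_max_sq (s : ℝ) :
    HasDerivAt (fun t : ℝ => max t 0 ^ 2) (2 * max s 0) s := by
  rcases lt_trichotomy s 0 with h | h | h
  · have : HasDerivAt (fun _ : ℝ => (0:ℝ)) 0 s := hasDerivAt_const s 0
    have heq : (fun t : ℝ => max t 0 ^ 2) =ᶠ[nhds s] fun _ => (0:ℝ) := by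
      filter_upwards [eventually_lt_nhds h] with t ht
      simp [max_eq_right ht.le]
    rw [show (2 * max s 0 : ℝ) = 0 by rw [max_eq_right h.le]; ring]
    exact this.congr_of_eventuallyEq heq
  · subst h
    rw [hasDerivAt_iff_isLittleO_nhds_zero]
    rw [Asymptotics.isLittleO_iff]
    intro c hc
    filter_upwards [Metric.ball_mem_nhds (0:ℝ) hc] with h hh
    simp only [Metric.mem_ball, Real.dist_eq, sub_zero] at hh
    simp only [zero_add, max_self, ne_eq, OfNat.ofNat_ne_zero, not_false_eq_true,
      zero_pow, mul_zero, smul_zero, sub_zero, Real.norm_eq_abs]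
    have h1 : |max h 0 ^ 2| ≤ |h| * |h| := by
      rw [abs_of_nonneg (sq_nonneg _), sq]
      rcases le_or_gt h 0 with hh0 | hh0
      · rw [max_eq_right hh0]; nlinarith [abs_nonneg h]
      · rw [max_eq_left hh0.le]; exact mul_le_mul (le_abs_self h) (le_abs_self h) hh0.le (abs_nonneg h)
    calc |max h 0 ^ 2| ≤ |h| * |h| := h1
      _ ≤ c * |h| := by nlinarith [abs_nonneg h]
  · have : HasDerivAt (fun t : ℝ => t ^ 2) (2 * s) s := by
      simpa using (hasDerivAt_pow 2 s)
    have heq : (fun t : ℝ => max t 0 ^ 2) =ᶠ[nhds s] fun t => t ^ 2 := by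
      filter_upwards [eventually_gt_nhds h] with t ht
      rw [max_eq_left ht.le]
    rw [show (2 * max s 0 : ℝ) = 2 * s by rw [max_eq_left h.le]]
    exact this.congr_of_eventuallyEq heq

/-- Scalar version of the Huber penalty, in a globally smooth form. -/
noncomputable def phi (δ na : ℝ) (s : ℝ) : ℝ :=
  (max (s + δ) 0 ^ 2 - max (s - δ) 0 ^ 2) / (4 * δ * na)

lemma hasDerivAt_phi (δ na : ℝ) (s : ℝ) :
    HasDerivAt (phi δ na) ((2 * max (s + δ) 0 - 2 * max (s - δ) 0) / (4 * δ * na)) s := by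
  have h1 : HasDerivAt (fun t : ℝ => max (t + δ) 0 ^ 2) (2 * max (s + δ) 0) s := by
    have := (hasDerivAt_max_sq (s + δ)).comp s ((hasDerivAt_id s).add_const δ)
    simpa [Function.comp_def] using this
  have h2 : HasDerivAt (fun t : ℝ => max (t - δ) 0 ^ 2) (2 * max (s - δ) 0) s := by
    have := (hasDerivAt_max_sq (s - δ)).comp s ((hasDerivAt_id s).sub_const δ)
    simpa [Function.comp_def] using this
  exact (h1.sub h2).div_const _

lemma q_lip (δ u v : ℝ) :
    |(max (u + δ) 0 - max (u - δ) 0) - (max (v + δ) 0 - max (v - δ) 0)| ≤ |u - v| := by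
  have key : ∀ w z : ℝ, z ≤ w →
      |(max (w + δ) 0 - max (w - δ) 0) - (max (z + δ) 0 - max (z - δ) 0)| ≤ w - z := by
    intro w z hzw
    have hA1 : (0:ℝ) ≤ max (w + δ) 0 - max (z + δ) 0 :=
      sub_nonneg.mpr (max_le_max (by linarith) le_rfl)
    have hA2 : max (w + δ) 0 - max (z + δ) 0 ≤ w - z := by
      have := abs_max_sub_max_le_abs (w + δ) (z + δ) 0
      rw [show w + δ - (z + δ) = w - z by ring,
        abs_of_nonneg (show (0:ℝ) ≤ w - z by linarith)] at this
      exact (abs_le.mp this).2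
    have hB1 : (0:ℝ) ≤ max (w - δ) 0 - max (z - δ) 0 :=
      sub_nonneg.mpr (max_le_max (by linarith) le_rfl)
    have hB2 : max (w - δ) 0 - max (z - δ) 0 ≤ w - z := by
      have := abs_max_sub_max_le_abs (w - δ) (z - δ) 0
      rw [show w - δ - (z - δ) = w - z by ring,
        abs_of_nonneg (show (0:ℝ) ≤ w - z by linarith)] at this
      exact (abs_le.mp this).2
    rw [abs_le]; constructor <;> nlinarith
  rcases le_total v u with h | h
  · exact (key u v h).trans_eq (abs_of_nonneg (by linarith)).symm
  · rw [abs_sub_comm ((max (u + δ) 0 - max (u - δ) 0)) _]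
    exact (key v u h).trans_eq (by rw [abs_sub_comm]; exact (abs_of_nonneg (by linarith)).symm)

lemma huber_eq_phi {n : ℕ} (δ : ℝ) (hδ : 0 < δ) (a : EuclideanSpace ℝ (Fin n)) (ha : a ≠ 0)
    (b : ℝ) : huber δ a b = fun x => phi δ ‖a‖ (⟪a, x⟫ - b) := by
  funext x
  have hna : (0:ℝ) < ‖a‖ := norm_pos_iff.mpr ha
  set s := ⟪a, x⟫ - b with hs
  unfold huber phi
  rw [← hs]
  split_ifs with h1 h2
  · rw [max_eq_left (by linarith), max_eq_left (by linarith)]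
    field_simp
    ring
  · rw [max_eq_left (by linarith), max_eq_right (by push_neg at h1; linarith)]
    ring_nf
  · push_neg at h1 h2
    rw [max_eq_right (by linarith), max_eq_right (by linarith)]
    simp

/-- For `δ > 0`, the gradient of the one-sided Huber penalty is Lipschitz continuous with
constant `‖a‖/(2δ)`. -/
theorem huber_gradient_lipschitz {n : ℕ} (a : EuclideanSpace ℝ (Fin n)) (ha : a ≠ 0) (b : ℝ)
    (δ : ℝ) (hδ : 0 < δ) (x y : EuclideanSpace ℝ (Fin n)) :
    ‖gradient (huber δ a b) x - gradient (huber δ a b) y‖ ≤ ‖a‖ / (2 * δ) * ‖x - y‖ := by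
  have hna : (0:ℝ) < ‖a‖ := norm_pos_iff.mpr ha
  -- the derivative scalar
  set d : EuclideanSpace ℝ (Fin n) → ℝ := fun z =>
    (2 * max (⟪a, z⟫ - b + δ) 0 - 2 * max (⟪a, z⟫ - b - δ) 0) / (4 * δ * ‖a‖) with hd
  have hgrad : ∀ z, HasGradientAt (huber δ a b) (d z • a) z := by
    intro z
    rw [huber_eq_phi δ hδ a ha b, hasGradientAt_iff_hasFDerivAt]
    have hlin : HasFDerivAt (fun w : EuclideanSpace ℝ (Fin n) => ⟪a, w⟫ - b)
        (innerSL ℝ a) z := ((innerSL ℝ a).hasFDerivAt).sub_const b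
    have hphi := hasDerivAt_phi δ ‖a‖ (⟪a, z⟫ - b)
    have := hphi.comp_hasFDerivAt z hlin
    convert this using 1
    · rfl
    · rfl
    ext w
    simp only [d, InnerProductSpace.toDual_apply_apply, real_inner_smul_left,
      ContinuousLinearMap.coe_smul', Pi.smul_apply, innerSL_apply_apply, smul_eq_mul]
  have hgx := (hgrad x).gradient
  have hgy := (hgrad y).gradient
  rw [hgx, hgy, ← sub_smul, norm_smul]
  set sx := ⟪a, x⟫ - b with hsx
  set sy := ⟪a, y⟫ - b with hsy
  have hq : |(2 * max (sx + δ) 0 - 2 * max (sx - δ) 0) -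
      (2 * max (sy + δ) 0 - 2 * max (sy - δ) 0)| ≤ 2 * |sx - sy| := by
    have := q_lip δ sx sy
    calc |(2 * max (sx + δ) 0 - 2 * max (sx - δ) 0) -
        (2 * max (sy + δ) 0 - 2 * max (sy - δ) 0)|
        = |2 * ((max (sx + δ) 0 - max (sx - δ) 0) - (max (sy + δ) 0 - max (sy - δ) 0))| := by
          ring_nf
      _ = 2 * |(max (sx + δ) 0 - max (sx - δ) 0) - (max (sy + δ) 0 - max (sy - δ) 0)| := by
          rw [abs_mul, abs_two]
      _ ≤ 2 * |sx - sy| := by linarith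
  have hinner : |sx - sy| ≤ ‖a‖ * ‖x - y‖ := by
    have h' : sx - sy = ⟪a, x - y⟫ := by
      rw [hsx, hsy, inner_sub_right]; ring
    rw [h']
    exact abs_real_inner_le_norm a (x - y)
  have hdd : |d x - d y| ≤ ‖x - y‖ / (2 * δ) := by
    have hrw : d x - d y = ((2 * max (sx + δ) 0 - 2 * max (sx - δ) 0) -
        (2 * max (sy + δ) 0 - 2 * max (sy - δ) 0)) / (4 * δ * ‖a‖) := by
      simp only [hd, ← hsx, ← hsy]
      field_simp
    rw [hrw, abs_div, abs_of_pos (by positivity : (0:ℝ) < 4 * δ * ‖a‖),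
      div_le_div_iff₀ (by positivity) (by positivity)]
    calc |(2 * max (sx + δ) 0 - 2 * max (sx - δ) 0) -
          (2 * max (sy + δ) 0 - 2 * max (sy - δ) 0)| * (2 * δ)
        ≤ (2 * |sx - sy|) * (2 * δ) := by gcongr
      _ ≤ (2 * (‖a‖ * ‖x - y‖)) * (2 * δ) := by gcongr
      _ = ‖x - y‖ * (4 * δ * ‖a‖) := by ring
  calc |d x - d y| * ‖a‖ ≤ (‖x - y‖ / (2 * δ)) * ‖a‖ := by gcongr
    _ = ‖a‖ / (2 * δ) * ‖x - y‖ := by ring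
end

section
/- For any nonzero vector a ∈ ℝ^n, any b ∈ ℝ, any δ ≥ 0, and all x ∈ ℝ^n, one has h_δ(x; a, b) ≥ (1/4) dist(x, Y), where Y = {y ∈ ℝ^n : ⟨a,y⟩ ≤ b} and dist denotes the Euclidean distance to the set Y. -/
open scoped RealInnerProductSpace

/-- The one-sided Huber penalty dominates a quarter of the Euclidean distance to the
halfspace `Y = {y : ⟨a,y⟩ ≤ b}`. -/
theorem huber_ge_quarter_dist {n : ℕ} (a : EuclideanSpace ℝ (Fin n)) (ha : a ≠ 0) (b : ℝ)
    (δ : ℝ) (hδ : 0 ≤ δ) (x : EuclideanSpace ℝ (Fin n)) :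
    (1 / 4) * Metric.infDist x {y : EuclideanSpace ℝ (Fin n) | ⟪a, y⟫ ≤ b} ≤ huber δ a b x := by
  have hna : (0:ℝ) < ‖a‖ := norm_pos_iff.mpr ha
  set s : ℝ := ⟪a, x⟫ - b with hs
  set y : EuclideanSpace ℝ (Fin n) := x - (max s 0 / ‖a‖ ^ 2) • a with hy
  have hmem : y ∈ {y : EuclideanSpace ℝ (Fin n) | ⟪a, y⟫ ≤ b} := by
    simp only [Set.mem_setOf_eq, hy, inner_sub_right, real_inner_smul_right,
      real_inner_self_eq_norm_sq]
    have h2 : max s 0 / ‖a‖ ^ 2 * ‖a‖ ^ 2 = max s 0 := by field_simp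
    rw [h2]
    have h3 : s ≤ max s 0 := le_max_left _ _
    have : ⟪a, x⟫ = s + b := by rw [hs]; ring
    linarith
  have hdist : dist x y = max s 0 / ‖a‖ := by
    rw [dist_eq_norm]
    have hxy : x - y = (max s 0 / ‖a‖ ^ 2) • a := by simp [hy]
    rw [hxy, norm_smul, Real.norm_eq_abs, abs_of_nonneg (by positivity)]
    field_simp
  have hinf : Metric.infDist x {y : EuclideanSpace ℝ (Fin n) | ⟪a, y⟫ ≤ b}
      ≤ max s 0 / ‖a‖ := hdist ▸ Metric.infDist_le_dist_of_mem hmem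
  unfold huber
  rw [← hs]
  split_ifs with h1 h2
  · have hm : max s 0 = s := max_eq_left (by linarith)
    rw [hm] at hinf
    have : (0:ℝ) < s := lt_of_le_of_lt hδ h1
    nlinarith [div_nonneg this.le hna.le]
  · rcases le_or_gt s 0 with hsle | hsgt
    · have hm : max s 0 = 0 := max_eq_right hsle
      rw [hm, zero_div] at hinf
      have h4 : (s + δ) ^ 2 / (4 * δ * ‖a‖) ≥ 0 := by positivity
      nlinarith
    · have hδpos : 0 < δ := lt_of_lt_of_le hsgt (not_lt.mp h1)
      have hm : max s 0 = s := max_eq_left hsgt.le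
      rw [hm] at hinf
      have key : δ * s ≤ (s + δ) ^ 2 := by nlinarith
      have h5 : s / ‖a‖ ≤ (s + δ) ^ 2 / (δ * ‖a‖) := by
        rw [div_le_div_iff₀ hna (by positivity)]
        nlinarith
      have : (s + δ) ^ 2 / (4 * δ * ‖a‖) = (1/4) * ((s+δ)^2 / (δ * ‖a‖)) := by
        field_simp
      rw [this]
      nlinarith
  · have hm : max s 0 = 0 := max_eq_right (by push_neg at h2; linarith)
    rw [hm, zero_div] at hinf
    have := Metric.infDist_nonneg (x := x)
      (s := {y : EuclideanSpace ℝ (Fin n) | ⟪a, y⟫ ≤ b})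
    nlinarith
end

section
/- Let γ > 0 and δ ≥ 0 be arbitrary, and let x̂ ∈ ℝ^n satisfy ⟨a_i, x̂⟩ ≤ b_i for all i = 1,…,m. Define t = f(x̂) + γδ/(4 min_{1≤i≤m} ‖a_i‖). Then the level set {x ∈ ℝ^n : F_{γδ}(x) ≤ t} is nonempty, and every minimizer of F_{γδ} over ℝ^n belongs to the level set {x ∈ ℝ^n : f(x) ≤ t}. -/
open scoped RealInnerProductSpace

lemma huber_nonneg {n : ℕ} (δ : ℝ) (hδ : 0 ≤ δ) (a : EuclideanSpace ℝ (Fin n)) (b : ℝ)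
    (x : EuclideanSpace ℝ (Fin n)) : 0 ≤ huber δ a b x := by
  unfold huber
  split_ifs with h1 h2
  · apply div_nonneg (by linarith) (norm_nonneg a)
  · apply div_nonneg (sq_nonneg _) (by positivity)
  · exact le_refl 0

lemma huber_le {n : ℕ} (δ : ℝ) (hδ : 0 ≤ δ) (a : EuclideanSpace ℝ (Fin n)) (ha : a ≠ 0)
    (b : ℝ) (x : EuclideanSpace ℝ (Fin n)) (hx : ⟪a, x⟫ ≤ b) :
    huber δ a b x ≤ δ / (4 * ‖a‖) := by
  have hna : 0 < ‖a‖ := norm_pos_iff.mpr ha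
  unfold huber
  split_ifs with h1 h2
  · linarith
  · rcases eq_or_lt_of_le hδ with h0 | h0
    · subst h0
      have hs : ⟪a, x⟫ - b = 0 := by
        have := not_lt.mp h1
        simp only [neg_zero] at h2
        linarith
      rw [hs]; simp
    · have hsq : (⟪a, x⟫ - b + δ) ^ 2 ≤ δ ^ 2 := by nlinarith [not_lt.mp h1]
      calc (⟪a, x⟫ - b + δ) ^ 2 / (4 * δ * ‖a‖) ≤ δ ^ 2 / (4 * δ * ‖a‖) := by
            apply div_le_div_of_nonneg_right hsq (by positivity)
        _ = δ / (4 * ‖a‖) := by field_simp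
  · positivity

/-- Corollary: for any `γ > 0`, `δ ≥ 0` and any feasible point `x̂`, letting
`t = f(x̂) + γδ/(4 min_i ‖a_i‖)`, the level set `{x : F_{γδ}(x) ≤ t}` is nonempty and every
minimizer of `F_{γδ}` over `ℝⁿ` satisfies `f(x) ≤ t`. -/
theorem level_set_of_penalized {n m : ℕ} (hm : 0 < m) (f : EuclideanSpace ℝ (Fin n) → ℝ)
    (a : Fin m → EuclideanSpace ℝ (Fin n)) (ha : ∀ i, a i ≠ 0) (b : Fin m → ℝ)
    (γ δ : ℝ) (hγ : 0 < γ) (hδ : 0 ≤ δ)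
    (xhat : EuclideanSpace ℝ (Fin n)) (hxhat : ∀ i, ⟪a i, xhat⟫ ≤ b i)
    (F : EuclideanSpace ℝ (Fin n) → ℝ)
    (hF : F = fun x => f x + (γ / m) * ∑ i, huber δ (a i) (b i) x)
    (t : ℝ) (ht : t = f xhat + γ * δ / (4 * ⨅ i, ‖a i‖)) :
    ({x : EuclideanSpace ℝ (Fin n) | F x ≤ t}.Nonempty) ∧
      ∀ x, IsMinOn F Set.univ x → f x ≤ t := by
  haveI : Nonempty (Fin m) := ⟨⟨0, hm⟩⟩
  set c : ℝ := ⨅ i, ‖a i‖ with hc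
  obtain ⟨i0, hi0⟩ := Finite.exists_min fun i => ‖a i‖
  have hcge : ‖a i0‖ ≤ c := le_ciInf hi0
  have hcpos : 0 < c := lt_of_lt_of_le (norm_pos_iff.mpr (ha i0)) hcge
  have hcle : ∀ i, c ≤ ‖a i‖ := fun i => ciInf_le (Set.Finite.bddBelow (Set.finite_range _)) i
  have hterm : ∀ i : Fin m, huber δ (a i) (b i) xhat ≤ δ / (4 * c) := by
    intro i
    calc huber δ (a i) (b i) xhat ≤ δ / (4 * ‖a i‖) :=
          huber_le δ hδ (a i) (ha i) (b i) xhat (hxhat i)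
      _ ≤ δ / (4 * c) := by gcongr; exact hcle i
  have hmr : (0 : ℝ) < m := by exact_mod_cast hm
  have hFx : F xhat ≤ t := by
    rw [hF, ht]
    have hsum : ∑ i, huber δ (a i) (b i) xhat ≤ m * (δ / (4 * c)) := by
      calc ∑ i, huber δ (a i) (b i) xhat ≤ ∑ _i : Fin m, δ / (4 * c) :=
            Finset.sum_le_sum fun i _ => hterm i
        _ = m * (δ / (4 * c)) := by simp [Finset.sum_const, mul_comm]
    have : (γ / m) * ∑ i, huber δ (a i) (b i) xhat ≤ γ * δ / (4 * c) := by
      calc (γ / m) * ∑ i, huber δ (a i) (b i) xhat ≤ (γ / m) * (m * (δ / (4 * c))) := by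
            apply mul_le_mul_of_nonneg_left hsum (by positivity)
        _ = γ * δ / (4 * c) := by field_simp
    simpa using this
  refine ⟨⟨xhat, hFx⟩, fun x hx => ?_⟩
  have hFx' : F x ≤ F xhat := hx (Set.mem_univ xhat)
  have hfx : f x ≤ F x := by
    rw [hF]
    have : 0 ≤ (γ / m) * ∑ i, huber δ (a i) (b i) x := by
      apply mul_nonneg (by positivity)
      exact Finset.sum_nonneg fun i _ => huber_nonneg δ hδ (a i) (b i) x
    simpa using this
  linarith
end

section
/- Let a ∈ ℝ^n be nonzero, b ∈ ℝ, and δ_1 ≥ δ_2 > 0. Then for every x ∈ ℝ^n, ‖∇h_{δ_1}(x; a, b) − ∇h_{δ_2}(x; a, b)‖ ≤ (δ_1 − δ_2)/(2δ_1). -/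
open scoped RealInnerProductSpace

lemma hasDerivAt_sq_max (t : ℝ) : HasDerivAt (fun s : ℝ => max s 0 ^ 2) (2 * max t 0) t := by
  rcases lt_trichotomy t 0 with ht | rfl | ht
  · have h0 : HasDerivAt (fun _ : ℝ => (0:ℝ)) 0 t := hasDerivAt_const t 0
    have : max t 0 = 0 := max_eq_right ht.le
    rw [this, mul_zero]
    refine h0.congr_of_eventuallyEq ?_
    filter_upwards [Iio_mem_nhds ht] with s hs
    simp [max_eq_right (le_of_lt (Set.mem_Iio.mp hs))]
  · rw [hasDerivAt_iff_isLittleO]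
    simp only [max_self, ne_eq, OfNat.ofNat_ne_zero, not_false_eq_true, zero_pow, mul_zero,
      zero_mul, sub_zero, smul_eq_mul]
    rw [Asymptotics.isLittleO_iff]
    intro ε hε
    filter_upwards [Metric.ball_mem_nhds (0:ℝ) hε] with s hs
    simp only [Metric.mem_ball, Real.dist_eq, sub_zero] at hs
    have h1 : |max s 0| ≤ |s| := by
      rcases le_total s 0 with h | h <;> simp [max_eq_right, max_eq_left, h, abs_nonneg]
    calc ‖max s 0 ^ 2‖ = |max s 0| * |max s 0| := by rw [Real.norm_eq_abs, sq, abs_mul]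
      _ ≤ |s| * |s| := mul_le_mul h1 h1 (abs_nonneg _) (abs_nonneg _)
      _ ≤ ε * ‖s‖ := by rw [Real.norm_eq_abs]; nlinarith [abs_nonneg s]
  · have h0 : HasDerivAt (fun s : ℝ => s ^ 2) (2 * t) t := by
      simpa using (hasDerivAt_pow 2 t)
    rw [max_eq_left ht.le]
    refine h0.congr_of_eventuallyEq ?_
    filter_upwards [Ioi_mem_nhds ht] with s hs
    simp [max_eq_left (le_of_lt (Set.mem_Ioi.mp hs))]

lemma huber_eq {n : ℕ} (δ : ℝ) (hδ : 0 < δ) (a : EuclideanSpace ℝ (Fin n)) (b : ℝ) :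
    huber δ a b = fun x =>
      (max (⟪a, x⟫ - b + δ) 0 ^ 2 - max (⟪a, x⟫ - b - δ) 0 ^ 2) / (4 * δ * ‖a‖) := by
  funext x
  set s := ⟪a, x⟫ - b with hs
  rw [huber]
  split_ifs with h1 h2
  · rw [max_eq_left (by linarith), max_eq_left (by linarith),
      show (s + δ) ^ 2 - (s - δ) ^ 2 = 4 * δ * s from by ring,
      show (4 : ℝ) * δ * ‖a‖ = (4 * δ) * ‖a‖ from by ring,
      show (4 : ℝ) * δ * s = (4 * δ) * s from by ring,
      mul_div_mul_left _ _ (by positivity : (4:ℝ) * δ ≠ 0)]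
  · rw [max_eq_left (by linarith), max_eq_right (by linarith)]
    rw [hs]
    ring_nf
  · rw [max_eq_right (by linarith), max_eq_right (by linarith)]
    simp

lemma huber_hasGradientAt {n : ℕ} (δ : ℝ) (a : EuclideanSpace ℝ (Fin n)) (b : ℝ)
    (x : EuclideanSpace ℝ (Fin n)) :
    HasGradientAt (fun y => (max (⟪a, y⟫ - b + δ) 0 ^ 2 - max (⟪a, y⟫ - b - δ) 0 ^ 2)
        / (4 * δ * ‖a‖))
      (((2 * max (⟪a, x⟫ - b + δ) 0 - 2 * max (⟪a, x⟫ - b - δ) 0) / (4 * δ * ‖a‖)) • a) x := by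
  set s := ⟪a, x⟫ - b with hs
  have hg : HasFDerivAt (fun y : EuclideanSpace ℝ (Fin n) => ⟪a, y⟫ - b)
      (innerSL ℝ a) x := ((innerSL ℝ a).hasFDerivAt).sub_const b
  have hd : HasDerivAt (fun t : ℝ => (max (t + δ) 0 ^ 2 - max (t - δ) 0 ^ 2) / (4 * δ * ‖a‖))
      ((2 * max (s + δ) 0 - 2 * max (s - δ) 0) / (4 * δ * ‖a‖)) s := by
    have h1 : HasDerivAt (fun t : ℝ => max (t + δ) 0 ^ 2) (2 * max (s + δ) 0) s := by
      have := (hasDerivAt_sq_max (s + δ)).comp s ((hasDerivAt_id s).add_const δ)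
      simpa [Function.comp_def] using this
    have h2 : HasDerivAt (fun t : ℝ => max (t - δ) 0 ^ 2) (2 * max (s - δ) 0) s := by
      have := (hasDerivAt_sq_max (s - δ)).comp s ((hasDerivAt_id s).sub_const δ)
      simpa [Function.comp_def] using this
    exact (h1.sub h2).div_const _
  have hcomp := hd.comp_hasFDerivAt x hg
  rw [hasGradientAt_iff_hasFDerivAt]
  have heq : (InnerProductSpace.toDual ℝ (EuclideanSpace ℝ (Fin n)))
      (((2 * max (s + δ) 0 - 2 * max (s - δ) 0) / (4 * δ * ‖a‖)) • a)
      = ((2 * max (s + δ) 0 - 2 * max (s - δ) 0) / (4 * δ * ‖a‖)) • innerSL ℝ a := by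
    ext y
    simp [InnerProductSpace.toDual_apply_apply, inner_smul_left]
  rw [heq]
  exact hcomp

set_option maxHeartbeats 1000000 in
lemma key_ineq (δ₁ δ₂ s : ℝ) (hδ₂ : 0 < δ₂) (hδ : δ₂ ≤ δ₁) :
    |(max (s + δ₁) 0 - max (s - δ₁) 0) / (2 * δ₁) -
      (max (s + δ₂) 0 - max (s - δ₂) 0) / (2 * δ₂)| ≤ (δ₁ - δ₂) / (2 * δ₁) := by
  have hδ₁ : 0 < δ₁ := lt_of_lt_of_le hδ₂ hδ
  have hA : (2 * δ₁) ≠ 0 := by positivity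
  have hB : (2 * δ₂) ≠ 0 := by positivity
  rw [abs_le, ← neg_div, div_sub_div _ _ hA hB]
  rcases le_total (s + δ₁) 0 with h1 | h1 <;>
    rcases le_total (s + δ₂) 0 with h2 | h2 <;>
      rcases le_total (s - δ₁) 0 with h3 | h3 <;>
        rcases le_total (s - δ₂) 0 with h4 | h4 <;>
          (first | rw [max_eq_right h1] | rw [max_eq_left h1]) <;>
          (first | rw [max_eq_right h2] | rw [max_eq_left h2]) <;>
          (first | rw [max_eq_right h3] | rw [max_eq_left h3]) <;>
          (first | rw [max_eq_right h4] | rw [max_eq_left h4]) <;>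
            constructor <;>
              rw [div_le_div_iff₀ (by positivity) (by positivity)] <;>
                nlinarith [mul_pos hδ₁ hδ₂, sq_nonneg (δ₁ - δ₂), sq_nonneg (s - δ₂),
                  sq_nonneg (s + δ₂), sq_nonneg (s - δ₁), sq_nonneg (s + δ₁), sq_nonneg s,
                  mul_nonneg (sub_nonneg.2 hδ) hδ₂.le, mul_nonneg (sub_nonneg.2 hδ) hδ₁.le]

/-- For `δ₁ ≥ δ₂ > 0`, the gradients of the corresponding one-sided Huber penalties differ
in norm by at most `(δ₁ − δ₂)/(2δ₁)` at every point. -/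
theorem huber_gradient_diff_le {n : ℕ} (a : EuclideanSpace ℝ (Fin n)) (ha : a ≠ 0) (b : ℝ)
    (δ₁ δ₂ : ℝ) (hδ₂ : 0 < δ₂) (hδ : δ₂ ≤ δ₁) (x : EuclideanSpace ℝ (Fin n)) :
    ‖gradient (huber δ₁ a b) x - gradient (huber δ₂ a b) x‖ ≤ (δ₁ - δ₂) / (2 * δ₁) := by
  have hδ₁ : 0 < δ₁ := lt_of_lt_of_le hδ₂ hδ
  have hna : 0 < ‖a‖ := norm_pos_iff.mpr ha
  set s := ⟪a, x⟫ - b with hs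
  have hg₁ : gradient (huber δ₁ a b) x
      = ((2 * max (s + δ₁) 0 - 2 * max (s - δ₁) 0) / (4 * δ₁ * ‖a‖)) • a := by
    rw [huber_eq δ₁ hδ₁ a b]
    exact (huber_hasGradientAt δ₁ a b x).gradient
  have hg₂ : gradient (huber δ₂ a b) x
      = ((2 * max (s + δ₂) 0 - 2 * max (s - δ₂) 0) / (4 * δ₂ * ‖a‖)) • a := by
    rw [huber_eq δ₂ hδ₂ a b]
    exact (huber_hasGradientAt δ₂ a b x).gradient
  rw [hg₁, hg₂, ← sub_smul, norm_smul, Real.norm_eq_abs]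
  have hkey := key_ineq δ₁ δ₂ s hδ₂ hδ
  have hmul : |(2 * max (s + δ₁) 0 - 2 * max (s - δ₁) 0) / (4 * δ₁ * ‖a‖)
      - (2 * max (s + δ₂) 0 - 2 * max (s - δ₂) 0) / (4 * δ₂ * ‖a‖)| * ‖a‖
      = |(max (s + δ₁) 0 - max (s - δ₁) 0) / (2 * δ₁) -
        (max (s + δ₂) 0 - max (s - δ₂) 0) / (2 * δ₂)| := by
    rw [← abs_of_pos hna, ← abs_mul]
    congr 1
    field_simp
    rw [abs_of_pos hna]
    ring
  rw [hmul]
  exact hkey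
end

section
/- Let f : ℝ^n → ℝ be differentiable and μ-strongly convex with μ > 0, let a_1,…,a_m ∈ ℝ^n be nonzero and b_1,…,b_m ∈ ℝ, let X_i = {x : ⟨a_i,x⟩ ≤ b_i} and X = ∩_{i=1}^m X_i be nonempty, and let x* be the minimizer of f over X. Let γ > 0 and δ > 0, let x_γδ* be the minimizer of F_{γδ} over ℝ^n, and let p = Π_X[x_γδ*] be the Euclidean projection of x_γδ* onto X. Suppose β > 0 satisfies the Hoffman bound β Σ_{i=1}^m dist(x, X_i) ≥ dist(x, X) for all x ∈ ℝ^n, and suppose L > 0 satisfies ‖∇f(z)‖ ≤ L for all z on the segment joining x_γδ* and p and at x_γδ* and p themselves. Then (μ/2)‖x* − x_γδ*‖² + (μ/2)‖x* − p‖² + (γ/(4mβ) − L) dist(x_γδ*, X) ≤ γδ/(4 α_min), where α_min = min_{1≤i≤m} ‖a_i‖. -/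
open scoped RealInnerProductSpace

private lemma hasDerivAt_of_sq_bound {ψ : ℝ → ℝ} {s d C : ℝ}
    (h : ∀ᶠ u in nhds s, |ψ u - ψ s - (u - s) * d| ≤ C * (u - s) ^ 2) :
    HasDerivAt ψ d s := by
  rw [hasDerivAt_iff_isLittleO]
  have h1 : (fun u => ψ u - ψ s - (u - s) • d) =O[nhds s] fun u => (u - s) ^ 2 := by
    apply Asymptotics.IsBigO.of_bound C
    filter_upwards [h] with u hu
    simpa [Real.norm_eq_abs, abs_pow, sq_abs, smul_eq_mul] using hu
  have h2 : (fun u : ℝ => (u - s) ^ 2) =o[nhds s] fun u => u - s := by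
    rw [Asymptotics.isLittleO_iff]
    intro ε hε
    filter_upwards [Metric.closedBall_mem_nhds s hε] with u hu
    rw [Metric.mem_closedBall, Real.dist_eq] at hu
    rw [Real.norm_eq_abs, Real.norm_eq_abs, abs_pow]
    nlinarith [abs_nonneg (u - s)]
  exact h1.trans_isLittleO h2

private lemma psi_convex (b c δ : ℝ) (hc : 0 < c) (hδ : 0 < δ) :
    ConvexOn ℝ Set.univ (fun s : ℝ =>
      if δ < s - b then (s - b) / c
      else if -δ ≤ s - b then (s - b + δ) ^ 2 / (4 * δ * c) else 0) := by
  set ψ : ℝ → ℝ := fun s =>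
      if δ < s - b then (s - b) / c
      else if -δ ≤ s - b then (s - b + δ) ^ 2 / (4 * δ * c) else 0 with hψdef
  set D : ℝ → ℝ := fun s => min (max (s - b + δ) 0) (2 * δ) / (2 * δ * c) with hDdef
  have hψd : ∀ s, HasDerivAt ψ (D s) s := by
    intro s
    rcases lt_trichotomy (s - b) δ with h1 | h1 | h1
    · rcases lt_trichotomy (s - b) (-δ) with h2 | h2 | h2
      · -- region: zero
        have hD : D s = 0 := by
          simp only [hDdef]
          rw [max_eq_right (by linarith), min_eq_left (by linarith), zero_div]
        rw [hD]
        apply HasDerivAt.congr_of_eventuallyEq (hasDerivAt_const s 0)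
        filter_upwards [Iio_mem_nhds (show s < b - δ by linarith)] with u hu
        rw [Set.mem_Iio] at hu
        simp only [hψdef]
        rw [if_neg (by linarith), if_neg (by linarith)]
      · -- junction at s - b = -δ
        have hD : D s = 0 := by
          simp only [hDdef]
          rw [show s - b + δ = 0 by linarith, max_self, min_eq_left (by linarith), zero_div]
        rw [hD]
        apply hasDerivAt_of_sq_bound (C := 1 / (4 * δ * c))
        have hψs : ψ s = 0 := by
          simp only [hψdef]
          rw [if_neg (by linarith), if_pos (by linarith), show s - b + δ = 0 by linarith]
          simp
        filter_upwards [Metric.ball_mem_nhds s hδ] with u hu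
        rw [Metric.mem_ball, Real.dist_eq] at hu
        have habs := abs_lt.mp hu
        have hub : u - b < δ := by linarith
        rw [hψs]
        by_cases h3 : -δ ≤ u - b
        · have he : ψ u = (u - b + δ) ^ 2 / (4 * δ * c) := by
            simp only [hψdef]; rw [if_neg (by linarith), if_pos h3]
          rw [he, show u - b + δ = u - s by linarith]
          simp only [mul_zero, sub_zero]
          rw [abs_of_nonneg (by positivity)]
          exact le_of_eq (by ring)
        · have he : ψ u = 0 := by
            simp only [hψdef]; rw [if_neg (by linarith), if_neg h3]
          rw [he]
          simp only [mul_zero, sub_zero, sub_self, abs_zero]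
          positivity
      · -- interior quadratic region
        have hq : HasDerivAt (fun u : ℝ => (u - b + δ) ^ 2 / (4 * δ * c))
            ((s - b + δ) / (2 * δ * c)) s := by
          have h0 : HasDerivAt (fun u : ℝ => u - b + δ) 1 s :=
            ((hasDerivAt_id s).sub_const b).add_const δ
          have h1' := (h0.pow 2).div_const (4 * δ * c)
          refine HasDerivAt.congr_deriv h1' ?_
          norm_num
          ring
        have hD : D s = (s - b + δ) / (2 * δ * c) := by
          simp only [hDdef]
          rw [max_eq_left (by linarith), min_eq_left (by linarith)]
        rw [hD]
        apply hq.congr_of_eventuallyEq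
        filter_upwards [Ioo_mem_nhds (show b - δ < s by linarith) (show s < b + δ by linarith)]
          with u hu
        obtain ⟨hu1, hu2⟩ := hu
        simp only [hψdef]
        rw [if_neg (by linarith), if_pos (by linarith)]
    · -- junction at s - b = δ
      have hD : D s = 1 / c := by
        simp only [hDdef]
        rw [max_eq_left (by linarith), show s - b + δ = 2 * δ by linarith, min_self]
        field_simp
      rw [hD]
      apply hasDerivAt_of_sq_bound (C := 1 / (4 * δ * c))
      have hψs : ψ s = δ / c := by
        simp only [hψdef]
        rw [if_neg (by linarith), if_pos (by linarith), show s - b + δ = 2 * δ by linarith]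
        field_simp
        ring
      filter_upwards [Metric.ball_mem_nhds s (by linarith : (0:ℝ) < 2 * δ)] with u hu
      rw [Metric.mem_ball, Real.dist_eq] at hu
      have habs := abs_lt.mp hu
      have hub : -δ ≤ u - b := by linarith
      rw [hψs]
      by_cases h3 : δ < u - b
      · have he : ψ u = (u - b) / c := by simp only [hψdef]; rw [if_pos h3]
        rw [he, show u - s = (u - b) - δ by linarith]
        have hz : (u - b) / c - δ / c - ((u - b) - δ) * (1 / c) = 0 := by ring
        rw [hz, abs_zero]
        positivity
      · have he : ψ u = (u - b + δ) ^ 2 / (4 * δ * c) := by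
          simp only [hψdef]; rw [if_neg h3, if_pos hub]
        rw [he]
        have hs' : s = b + δ := by linarith
        have key : (u - b + δ) ^ 2 / (4 * δ * c) - δ / c - (u - s) * (1 / c)
            = (u - s) ^ 2 / (4 * δ * c) := by
          rw [hs']
          field_simp
          ring
        rw [key, abs_of_nonneg (by positivity)]
        exact le_of_eq (by ring)
    · -- linear region
      have hl : HasDerivAt (fun u : ℝ => (u - b) / c) (1 / c) s := by
        simpa using ((hasDerivAt_id s).sub_const b).div_const c
      have hD : D s = 1 / c := by
        simp only [hDdef]
        rw [max_eq_left (by linarith), min_eq_right (by linarith)]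
        field_simp
      rw [hD]
      apply hl.congr_of_eventuallyEq
      filter_upwards [Ioi_mem_nhds (show b + δ < s by linarith)] with u hu
      rw [Set.mem_Ioi] at hu
      simp only [hψdef]
      rw [if_pos (by linarith)]
  have hdiff : Differentiable ℝ ψ := fun s => (hψd s).differentiableAt
  have hderiv : deriv ψ = D := funext fun s => (hψd s).deriv
  have hmono : Monotone (deriv ψ) := by
    rw [hderiv]
    have hlin : Monotone fun s : ℝ => s - b + δ := fun u v huv => by dsimp; linarith
    have h1 : Monotone fun s : ℝ => min (max (s - b + δ) 0) (2 * δ) :=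
      (hlin.max monotone_const).min monotone_const
    exact h1.div_const (by positivity)
  exact Monotone.convexOn_univ_of_deriv hdiff hmono

private lemma huber_convexOn {n : ℕ} {δ : ℝ} (hδ : 0 < δ) (a : EuclideanSpace ℝ (Fin n))
    (ha : a ≠ 0) (b : ℝ) : ConvexOn ℝ Set.univ (huber δ a b) := by
  have hc : 0 < ‖a‖ := norm_pos_iff.mpr ha
  have hψ := psi_convex b ‖a‖ δ hc hδ
  have hcomp := hψ.comp_linearMap ((innerSL ℝ a).toLinearMap)
  rw [Set.preimage_univ] at hcomp
  have heq : huber δ a b = (fun s : ℝ =>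
      if δ < s - b then (s - b) / ‖a‖
      else if -δ ≤ s - b then (s - b + δ) ^ 2 / (4 * δ * ‖a‖) else 0)
      ∘ ⇑((innerSL ℝ a).toLinearMap) := by
    funext x
    simp [huber, Function.comp]
  rw [heq]
  exact hcomp

private lemma huber_ge {n : ℕ} {δ : ℝ} (hδ : 0 < δ) (a : EuclideanSpace ℝ (Fin n))
    (ha : a ≠ 0) (b : ℝ) (x : EuclideanSpace ℝ (Fin n)) :
    max (⟪a, x⟫ - b) 0 / ‖a‖ ≤ huber δ a b x := by
  have hc : 0 < ‖a‖ := norm_pos_iff.mpr ha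
  unfold huber
  set t := ⟪a, x⟫ - b with htdef
  split_ifs with h1 h2
  · rw [max_eq_left (by linarith)]
  · rcases le_total t 0 with h | h
    · rw [max_eq_right h, zero_div]
      positivity
    · rw [max_eq_left h, div_le_div_iff₀ hc (by positivity)]
      nlinarith [sq_nonneg (t - δ)]
  · push_neg at h1 h2
    rw [max_eq_right (by linarith)]
    simp

private lemma huber_le_of_mem {n : ℕ} {δ : ℝ} (hδ : 0 < δ) (a : EuclideanSpace ℝ (Fin n))
    (ha : a ≠ 0) (b : ℝ) (x : EuclideanSpace ℝ (Fin n)) (h : ⟪a, x⟫ ≤ b) :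
    huber δ a b x ≤ δ / (4 * ‖a‖) := by
  have hc : 0 < ‖a‖ := norm_pos_iff.mpr ha
  unfold huber
  split_ifs with h1 h2
  · linarith
  · rw [div_le_div_iff₀ (by positivity) (by positivity)]
    have hb2 : (⟪a, x⟫ - b + δ) ^ 2 ≤ δ ^ 2 := by nlinarith
    nlinarith [mul_le_mul_of_nonneg_right hb2 hc.le]
  · positivity

private lemma infDist_halfspace_le {n : ℕ} (a : EuclideanSpace ℝ (Fin n)) (ha : a ≠ 0)
    (b : ℝ) (x : EuclideanSpace ℝ (Fin n)) :
    Metric.infDist x {y : EuclideanSpace ℝ (Fin n) | ⟪a, y⟫ ≤ b}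
      ≤ max (⟪a, x⟫ - b) 0 / ‖a‖ := by
  have hc : 0 < ‖a‖ := norm_pos_iff.mpr ha
  by_cases hx : ⟪a, x⟫ ≤ b
  · have h0 : Metric.infDist x {y : EuclideanSpace ℝ (Fin n) | ⟪a, y⟫ ≤ b} = 0 :=
      Metric.infDist_zero_of_mem (by exact hx)
    rw [h0]
    exact div_nonneg (le_max_right _ _) (norm_nonneg a)
  · push_neg at hx
    set t := ⟪a, x⟫ - b with htdef
    have ht : 0 < t := by simp only [htdef]; linarith
    set y := x - (t / ‖a‖ ^ 2) • a with hydef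
    have hy : y ∈ {y : EuclideanSpace ℝ (Fin n) | ⟪a, y⟫ ≤ b} := by
      simp only [Set.mem_setOf_eq, hydef]
      rw [inner_sub_right, real_inner_smul_right, real_inner_self_eq_norm_sq]
      have : t / ‖a‖ ^ 2 * ‖a‖ ^ 2 = t := by field_simp
      rw [this]
      simp only [htdef]
      linarith
    calc Metric.infDist x {y : EuclideanSpace ℝ (Fin n) | ⟪a, y⟫ ≤ b}
        ≤ dist x y := Metric.infDist_le_dist_of_mem hy
      _ = ‖(t / ‖a‖ ^ 2) • a‖ := by rw [dist_eq_norm, hydef, sub_sub_cancel]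
      _ = t / ‖a‖ ^ 2 * ‖a‖ := by
          rw [norm_smul, Real.norm_eq_abs, abs_of_pos (by positivity)]
      _ = t / ‖a‖ := by field_simp
      _ = max t 0 / ‖a‖ := by rw [max_eq_left ht.le]

private lemma strong_min {n : ℕ} {μ : ℝ} (hμ : 0 < μ)
    {f P : EuclideanSpace ℝ (Fin n) → ℝ}
    (hf : StrongConvexOn Set.univ μ f) (hP : ConvexOn ℝ Set.univ P)
    {S : Set (EuclideanSpace ℝ (Fin n))} (hS : Convex ℝ S)
    {x y : EuclideanSpace ℝ (Fin n)} (hx : x ∈ S) (hy : y ∈ S)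
    (hmin : IsMinOn (fun z => f z + P z) S x) :
    f x + P x + μ / 2 * ‖y - x‖ ^ 2 ≤ f y + P y := by
  by_cases hxy : y = x
  · subst hxy
    simp
  · have hn : 0 < ‖y - x‖ := by
      rw [norm_pos_iff, sub_ne_zero]
      exact hxy
    have hd0 : 0 < μ / 2 * ‖y - x‖ ^ 2 := by positivity
    set d := μ / 2 * ‖y - x‖ ^ 2 with hdd
    by_contra hcon
    push_neg at hcon
    set ε := f x + P x + d - (f y + P y) with hεdef
    have hεpos : 0 < ε := by simp only [hεdef]; linarith
    set t := min 1 (ε / (2 * d)) with htdef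
    have ht0 : 0 < t := lt_min one_pos (by positivity)
    have ht1 : t ≤ 1 := min_le_left _ _
    have htd : t * d ≤ ε / 2 := by
      have h := min_le_right 1 (ε / (2 * d))
      calc t * d ≤ ε / (2 * d) * d := mul_le_mul_of_nonneg_right h hd0.le
        _ = ε / 2 := by field_simp
    have hz : t • y + (1 - t) • x ∈ S := hS hy hx ht0.le (by linarith) (by ring)
    have h1 : f x + P x ≤ f (t • y + (1 - t) • x) + P (t • y + (1 - t) • x) :=
      isMinOn_iff.mp hmin _ hz
    have h2 : f (t • y + (1 - t) • x) ≤ t * f y + (1 - t) * f x - t * (1 - t) * d := by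
      have := hf.2 (Set.mem_univ y) (Set.mem_univ x) ht0.le
        (by linarith : (0:ℝ) ≤ 1 - t) (by ring)
      rw [hdd]
      simpa [smul_eq_mul] using this
    have h3 : P (t • y + (1 - t) • x) ≤ t * P y + (1 - t) * P x := by
      have := hP.2 (Set.mem_univ y) (Set.mem_univ x) ht0.le
        (by linarith : (0:ℝ) ≤ 1 - t) (by ring)
      simpa [smul_eq_mul] using this
    have h4 : t * (f x + P x + (1 - t) * d) ≤ t * (f y + P y) := by nlinarith [h1, h2, h3]
    have h5 : f x + P x + (1 - t) * d ≤ f y + P y := le_of_mul_le_mul_left h4 ht0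
    have h6 : f x + P x + d ≤ f y + P y + t * d := by nlinarith [h5]
    have h7 : f y + P y = f x + P x + d - ε := by simp only [hεdef]; ring
    linarith

/-- Error-bound lemma: for the minimizer `x_{γδ}*` of the penalized objective, its projection
`p` onto the feasible set `X`, a Hoffman constant `β` and a gradient bound `L`, one has
`(μ/2)‖x* − x_{γδ}*‖² + (μ/2)‖x* − p‖² + (γ/(4mβ) − L)·dist(x_{γδ}*, X) ≤ γδ/(4α_min)`. -/
theorem penalized_error_bound {n m : ℕ} (hm : 0 < m) (μ : ℝ) (hμ : 0 < μ)
    (f : EuclideanSpace ℝ (Fin n) → ℝ) (hf : StrongConvexOn Set.univ μ f)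
    (hdf : Differentiable ℝ f)
    (a : Fin m → EuclideanSpace ℝ (Fin n)) (ha : ∀ i, a i ≠ 0) (b : Fin m → ℝ)
    (X : Set (EuclideanSpace ℝ (Fin n)))
    (hX : X = {x | ∀ i, ⟪a i, x⟫ ≤ b i}) (hXne : X.Nonempty)
    (xstar : EuclideanSpace ℝ (Fin n)) (hxstarX : xstar ∈ X) (hxstar : IsMinOn f X xstar)
    (γ δ : ℝ) (hγ : 0 < γ) (hδ : 0 < δ)
    (xg : EuclideanSpace ℝ (Fin n))
    (hxg : IsMinOn (fun x => f x + (γ / m) * ∑ i, huber δ (a i) (b i) x) Set.univ xg)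
    (p : EuclideanSpace ℝ (Fin n)) (hpX : p ∈ X) (hproj : ∀ y ∈ X, ‖xg - p‖ ≤ ‖xg - y‖)
    (β : ℝ) (hβ : 0 < β)
    (hHoffman : ∀ x, Metric.infDist x X ≤
      β * ∑ i, Metric.infDist x {y : EuclideanSpace ℝ (Fin n) | ⟪a i, y⟫ ≤ b i})
    (L : ℝ) (hL : 0 < L) (hLbound : ∀ z ∈ segment ℝ xg p, ‖gradient f z‖ ≤ L) :
    μ / 2 * ‖xstar - xg‖ ^ 2 + μ / 2 * ‖xstar - p‖ ^ 2 +
        (γ / (4 * m * β) - L) * Metric.infDist xg X ≤ γ * δ / (4 * ⨅ i, ‖a i‖) := by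
  classical
  haveI : Nonempty (Fin m) := Fin.pos_iff_nonempty.mp hm
  have hm' : (0:ℝ) < m := Nat.cast_pos.mpr hm
  -- the minimal norm
  obtain ⟨i0, hi0⟩ := Finite.exists_min fun i => ‖a i‖
  have hAle : ∀ i, (⨅ j, ‖a j‖) ≤ ‖a i‖ := fun i =>
    ciInf_le (Set.Finite.bddBelow (Set.finite_range _)) i
  have hApos : 0 < ⨅ j, ‖a j‖ :=
    lt_of_lt_of_le (norm_pos_iff.mpr (ha i0)) (le_ciInf hi0)
  set A := ⨅ j, ‖a j‖ with hAdef
  -- convexity of X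
  have hXconv : Convex ℝ X := by
    rw [hX]
    intro u hu v hv s t hs ht hst
    intro i
    simp only [Set.mem_setOf_eq] at hu hv
    have hmem : ⟪a i, s • u + t • v⟫ = s * ⟪a i, u⟫ + t * ⟪a i, v⟫ := by
      rw [inner_add_right, real_inner_smul_right, real_inner_smul_right]
    show ⟪a i, s • u + t • v⟫ ≤ b i
    rw [hmem]
    have e : s * b i + t * b i = b i := by rw [← add_mul, hst, one_mul]
    have e1 := mul_le_mul_of_nonneg_left (hu i) hs
    have e2 := mul_le_mul_of_nonneg_left (hv i) ht
    linarith
  -- penalty convexity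
  have hsum : ∀ (s : Finset (Fin m)),
      ConvexOn ℝ Set.univ (fun x => ∑ i ∈ s, huber δ (a i) (b i) x) := by
    intro s
    induction s using Finset.induction_on with
    | empty => simpa using convexOn_const (0:ℝ) convex_univ
    | @insert i s hi ih =>
      simp only [Finset.sum_insert hi]
      exact (huber_convexOn hδ (a i) (ha i) (b i)).add ih
  have hPen : ConvexOn ℝ Set.univ (fun x => (γ / m) * ∑ i, huber δ (a i) (b i) x) := by
    have := (hsum Finset.univ).smul (show (0:ℝ) ≤ γ / m by positivity)
    simpa [smul_eq_mul] using this
  -- distance facts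
  have hdeq : Metric.infDist xg X = ‖xg - p‖ := by
    apply le_antisymm
    · simpa [dist_eq_norm] using Metric.infDist_le_dist_of_mem hpX
    · haveI : Nonempty X := hXne.to_subtype
      rw [Metric.infDist_eq_iInf]
      exact le_ciInf fun y => by rw [dist_eq_norm]; exact hproj y y.2
  have hd0 : 0 ≤ Metric.infDist xg X := Metric.infDist_nonneg
  -- lower bound for penalty at xg via Hoffman
  have h6 : Metric.infDist xg X ≤ β * ∑ i, huber δ (a i) (b i) xg := by
    refine (hHoffman xg).trans ?_
    apply mul_le_mul_of_nonneg_left _ hβ.le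
    apply Finset.sum_le_sum
    intro i _
    exact (infDist_halfspace_le (a i) (ha i) (b i) xg).trans
      (huber_ge hδ (a i) (ha i) (b i) xg)
  have h7 : γ * Metric.infDist xg X / (m * β) ≤ (γ / m) * ∑ i, huber δ (a i) (b i) xg := by
    have hS : Metric.infDist xg X / β ≤ ∑ i, huber δ (a i) (b i) xg := by
      rw [div_le_iff₀ hβ]
      linarith [h6]
    calc γ * Metric.infDist xg X / (m * β) = (γ / m) * (Metric.infDist xg X / β) := by
          field_simp
      _ ≤ (γ / m) * ∑ i, huber δ (a i) (b i) xg :=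
          mul_le_mul_of_nonneg_left hS (by positivity)
  -- upper bound for penalty at xstar
  have h8 : (γ / m) * ∑ i, huber δ (a i) (b i) xstar ≤ γ * δ / (4 * A) := by
    have hterm : ∀ i, huber δ (a i) (b i) xstar ≤ δ / (4 * A) := by
      intro i
      have hmem : ⟪a i, xstar⟫ ≤ b i := by
        rw [hX] at hxstarX
        exact hxstarX i
      refine (huber_le_of_mem hδ (a i) (ha i) (b i) xstar hmem).trans ?_
      exact div_le_div_of_nonneg_left hδ.le (by positivity) (by linarith [hAle i])
    calc (γ / m) * ∑ i, huber δ (a i) (b i) xstar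
        ≤ (γ / m) * ∑ _i : Fin m, δ / (4 * A) :=
          mul_le_mul_of_nonneg_left (Finset.sum_le_sum fun i _ => hterm i) (by positivity)
      _ = (γ / m) * (m * (δ / (4 * A))) := by
          rw [Finset.sum_const, Finset.card_univ, Fintype.card_fin, nsmul_eq_mul]
      _ = γ * δ / (4 * A) := by field_simp
  -- Lipschitz step
  have hfd : ∀ z ∈ segment ℝ xg p, ‖fderiv ℝ f z‖ ≤ L := by
    intro z hz
    have := hLbound z hz
    rwa [gradient, LinearIsometryEquiv.norm_map] at this
  have h9 : ‖f p - f xg‖ ≤ L * ‖p - xg‖ :=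
    (convex_segment xg p).norm_image_sub_le_of_norm_fderiv_le (fun z _ => hdf z) hfd
      (left_mem_segment ℝ xg p) (right_mem_segment ℝ xg p)
  have h10 : f p - f xg ≤ L * Metric.infDist xg X := by
    have h9' : |f p - f xg| ≤ L * ‖p - xg‖ := by rwa [Real.norm_eq_abs] at h9
    rw [hdeq, ← norm_sub_rev p xg]
    exact (le_abs_self _).trans h9'
  -- strong convexity applications
  have hmin0 : IsMinOn (fun z => f z + (fun _ => (0:ℝ)) z) X xstar := by
    apply isMinOn_iff.mpr
    intro z hz
    simpa using isMinOn_iff.mp hxstar z hz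
  have hkey1 : f xstar + 0 + μ / 2 * ‖p - xstar‖ ^ 2 ≤ f p + 0 :=
    strong_min hμ hf (convexOn_const (0:ℝ) convex_univ) hXconv hxstarX hpX hmin0
  have hkey1' : f xstar + μ / 2 * ‖xstar - p‖ ^ 2 ≤ f p := by
    rw [norm_sub_rev] at hkey1
    linarith
  have hkey2 : f xg + (γ / m) * ∑ i, huber δ (a i) (b i) xg + μ / 2 * ‖xstar - xg‖ ^ 2 ≤
      f xstar + (γ / m) * ∑ i, huber δ (a i) (b i) xstar :=
    strong_min hμ hf hPen convex_univ (Set.mem_univ xg) (Set.mem_univ xstar) hxg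
  -- coefficient comparison
  have hcoef : γ / (4 * m * β) * Metric.infDist xg X ≤ γ * Metric.infDist xg X / (m * β) := by
    rw [div_mul_eq_mul_div]
    exact div_le_div_of_nonneg_left (mul_nonneg hγ.le hd0) (by positivity)
      (by nlinarith [mul_pos hm' hβ])
  have heq : (γ / (4 * m * β) - L) * Metric.infDist xg X =
      γ / (4 * m * β) * Metric.infDist xg X - L * Metric.infDist xg X := by ring
  linarith [hkey1', hkey2, h7, h8, h10, hcoef, heq]
end

section
/- Under the hypotheses of the error-bound lemma (f differentiable and μ-strongly convex with μ > 0, X = ∩_{i=1}^m {x : ⟨a_i,x⟩ ≤ b_i} nonempty with minimizer x* of f over X, x_γδ* the minimizer of F_{γδ}, p = Π_X[x_γδ*], β > 0 a Hoffman constant with β Σ_i dist(x,X_i) ≥ dist(x,X) for all x, and L ≥ ‖∇f(z)‖ on the segment joining x_γδ* and p), if moreover γ ≥ 4mβL, then ‖x* − x_γδ*‖² ≤ γδ/(2μ α_min), where α_min = min_{1≤i≤m} ‖a_i‖. -/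
open scoped RealInnerProductSpace

/-- Scalar version of the one-sided Huber penalty. -/
noncomputable def hub (δ t : ℝ) : ℝ :=
  if δ < t then t else if -δ ≤ t then (t + δ) ^ 2 / (4 * δ) else 0

lemma huber_eq_hub {n : ℕ} (δ : ℝ) (a : EuclideanSpace ℝ (Fin n)) (b : ℝ)
    (x : EuclideanSpace ℝ (Fin n)) : huber δ a b x = hub δ (⟪a, x⟫ - b) / ‖a‖ := by
  unfold huber hub
  split_ifs with h1 h2
  · rfl
  · rw [div_div]
  · simp

lemma hub_lb {δ : ℝ} (hδ : 0 < δ) {s : ℝ} (hs0 : 0 ≤ s) (hs1 : s ≤ 1) (t : ℝ) :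
    s * (t + δ) - δ * s ^ 2 ≤ hub δ t := by
  unfold hub
  split_ifs with h1 h2
  · nlinarith [mul_nonneg (sub_nonneg.2 hs1) (by nlinarith : (0:ℝ) ≤ t - δ * s)]
  · rw [le_div_iff₀ (by positivity : (0:ℝ) < 4 * δ)]
    nlinarith [sq_nonneg (t + δ - 2 * δ * s)]
  · nlinarith [mul_nonneg hs0 hs0, mul_nonneg hs0 (by linarith : (0:ℝ) ≤ -(t + δ))]

lemma hub_eq_max {δ : ℝ} (hδ : 0 < δ) (t : ℝ) :
    ∃ s, 0 ≤ s ∧ s ≤ 1 ∧ hub δ t = s * (t + δ) - δ * s ^ 2 := by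
  unfold hub
  split_ifs with h1 h2
  · exact ⟨1, zero_le_one, le_rfl, by ring⟩
  · refine ⟨(t + δ) / (2 * δ), div_nonneg (by linarith) (by positivity), ?_, ?_⟩
    · rw [div_le_one (by positivity)]; linarith
    · field_simp; ring
  · exact ⟨0, le_rfl, zero_le_one, by ring⟩

lemma hub_convex_ineq {δ : ℝ} (hδ : 0 < δ) (s t c d : ℝ) (hc : 0 ≤ c) (hd : 0 ≤ d)
    (hcd : c + d = 1) : hub δ (c * s + d * t) ≤ c * hub δ s + d * hub δ t := by
  obtain ⟨u, hu0, hu1, hu⟩ := hub_eq_max hδ (c * s + d * t)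
  have e1 := mul_le_mul_of_nonneg_left (hub_lb hδ hu0 hu1 s) hc
  have e2 := mul_le_mul_of_nonneg_left (hub_lb hδ hu0 hu1 t) hd
  rw [hu]
  calc u * (c * s + d * t + δ) - δ * u ^ 2
      = c * (u * (s + δ) - δ * u ^ 2) + d * (u * (t + δ) - δ * u ^ 2) := by
        linear_combination (δ * u ^ 2 - δ * u) * hcd
    _ ≤ c * hub δ s + d * hub δ t := add_le_add e1 e2

lemma hub_nonneg {δ : ℝ} (hδ : 0 < δ) (t : ℝ) : 0 ≤ hub δ t := by
  have := hub_lb hδ (le_refl (0:ℝ)) zero_le_one t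
  simpa using this

lemma le_hub {δ : ℝ} (hδ : 0 < δ) (t : ℝ) : t ≤ hub δ t := by
  have := hub_lb hδ zero_le_one le_rfl t
  simpa using this

lemma hub_le_of_nonpos {δ : ℝ} (hδ : 0 < δ) {t : ℝ} (ht : t ≤ 0) : hub δ t ≤ δ / 4 := by
  unfold hub
  split_ifs with h1 h2
  · linarith
  · rw [div_le_div_iff₀ (by positivity) (by norm_num)]; nlinarith
  · positivity

/-- Convexity inequality for the vector Huber penalty. -/
lemma huber_convex_ineq {n : ℕ} {δ : ℝ} (hδ : 0 < δ) (a : EuclideanSpace ℝ (Fin n))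
    (ha : a ≠ 0) (b : ℝ) (x y : EuclideanSpace ℝ (Fin n)) (c d : ℝ) (hc : 0 ≤ c) (hd : 0 ≤ d)
    (hcd : c + d = 1) :
    huber δ a b (c • x + d • y) ≤ c * huber δ a b x + d * huber δ a b y := by
  have hna : (0:ℝ) < ‖a‖ := norm_pos_iff.2 ha
  rw [huber_eq_hub, huber_eq_hub, huber_eq_hub]
  have hinner : ⟪a, c • x + d • y⟫ - b = c * (⟪a, x⟫ - b) + d * (⟪a, y⟫ - b) := by
    rw [inner_add_right, real_inner_smul_right, real_inner_smul_right]
    linear_combination b * hcd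
  rw [hinner]
  calc hub δ (c * (⟪a, x⟫ - b) + d * (⟪a, y⟫ - b)) / ‖a‖
      ≤ (c * hub δ (⟪a, x⟫ - b) + d * hub δ (⟪a, y⟫ - b)) / ‖a‖ := by
        gcongr
        exact hub_convex_ineq hδ _ _ c d hc hd hcd
    _ = c * (hub δ (⟪a, x⟫ - b) / ‖a‖) + d * (hub δ (⟪a, y⟫ - b) / ‖a‖) := by ring

set_option maxHeartbeats 1000000 in
/-- Under the error-bound lemma hypotheses, if moreover `γ ≥ 4mβL`, then
`‖x* − x_{γδ}*‖² ≤ γδ/(2μ α_min)`. -/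
theorem penalized_sol_dist_bound {n m : ℕ} (hm : 0 < m) (μ : ℝ) (hμ : 0 < μ)
    (f : EuclideanSpace ℝ (Fin n) → ℝ) (hf : StrongConvexOn Set.univ μ f)
    (hdf : Differentiable ℝ f)
    (a : Fin m → EuclideanSpace ℝ (Fin n)) (ha : ∀ i, a i ≠ 0) (b : Fin m → ℝ)
    (X : Set (EuclideanSpace ℝ (Fin n)))
    (hX : X = {x | ∀ i, ⟪a i, x⟫ ≤ b i}) (hXne : X.Nonempty)
    (xstar : EuclideanSpace ℝ (Fin n)) (hxstarX : xstar ∈ X) (hxstar : IsMinOn f X xstar)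
    (γ δ : ℝ) (hγ : 0 < γ) (hδ : 0 < δ)
    (xg : EuclideanSpace ℝ (Fin n))
    (hxg : IsMinOn (fun x => f x + (γ / m) * ∑ i, huber δ (a i) (b i) x) Set.univ xg)
    (p : EuclideanSpace ℝ (Fin n)) (hpX : p ∈ X) (hproj : ∀ y ∈ X, ‖xg - p‖ ≤ ‖xg - y‖)
    (β : ℝ) (hβ : 0 < β)
    (hHoffman : ∀ x, Metric.infDist x X ≤
      β * ∑ i, Metric.infDist x {y : EuclideanSpace ℝ (Fin n) | ⟪a i, y⟫ ≤ b i})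
    (L : ℝ) (hL : 0 < L) (hLbound : ∀ z ∈ segment ℝ xg p, ‖gradient f z‖ ≤ L)
    (hγL : 4 * m * β * L ≤ γ) :
    ‖xstar - xg‖ ^ 2 ≤ γ * δ / (2 * μ * ⨅ i, ‖a i‖) := by
  haveI : Nonempty (Fin m) := ⟨⟨0, hm⟩⟩
  set α : ℝ := ⨅ i, ‖a i‖ with hα
  clear_value α
  have hm0 : (0:ℝ) < m := Nat.cast_pos.2 hm
  -- basic facts about α
  have hα_le : ∀ i, α ≤ ‖a i‖ := by
    intro i
    rw [hα]
    exact ciInf_le (Set.Finite.bddBelow (Set.finite_range _)) i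
  have hα_pos : 0 < α := by
    obtain ⟨i, hi⟩ := exists_eq_ciInf_of_finite (f := fun i => ‖a i‖)
    rw [hα, ← hi]
    exact norm_pos_iff.2 (ha i)
  set F : EuclideanSpace ℝ (Fin n) → ℝ :=
    fun x => f x + (γ / m) * ∑ i, huber δ (a i) (b i) x with hF
  clear_value F
  -- Step B : strong convexity consequence
  have keyB : F xg + μ / 2 * ‖xstar - xg‖ ^ 2 ≤ F xstar := by
    set K : ℝ := μ / 2 * ‖xg - xstar‖ ^ 2 with hK
    clear_value K
    have hKnn : 0 ≤ K := by rw [hK]; positivity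
    have key : ∀ d : ℝ, 0 < d → d ≤ 1 → F xg + (1 - d) * K ≤ F xstar := by
      intro d hd0 hd1
      set c : ℝ := 1 - d with hc
      clear_value c
      have hc0 : 0 ≤ c := by rw [hc]; linarith
      have hd0' : (0:ℝ) ≤ d := le_of_lt hd0
      have hcd : c + d = 1 := by rw [hc]; ring
      have h1 : f (c • xg + d • xstar) ≤ c * f xg + d * f xstar - c * d * K := by
        have := hf.2 (Set.mem_univ xg) (Set.mem_univ xstar) hc0 hd0' hcd
        simpa [smul_eq_mul, hK] using this
      have h2 : ∀ i : Fin m, huber δ (a i) (b i) (c • xg + d • xstar) ≤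
          c * huber δ (a i) (b i) xg + d * huber δ (a i) (b i) xstar := fun i =>
        huber_convex_ineq hδ (a i) (ha i) (b i) xg xstar c d hc0 hd0' hcd
      have hsum : ∑ i, huber δ (a i) (b i) (c • xg + d • xstar) ≤
          c * ∑ i, huber δ (a i) (b i) xg + d * ∑ i, huber δ (a i) (b i) xstar := by
        rw [Finset.mul_sum, Finset.mul_sum, ← Finset.sum_add_distrib]
        exact Finset.sum_le_sum fun i _ => h2 i
      have hγm : 0 ≤ γ / m := by positivity
      have hFmix : F (c • xg + d • xstar) ≤ c * F xg + d * F xstar - c * d * K := by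
        have h3 := mul_le_mul_of_nonneg_left hsum hγm
        simp only [hF]
        nlinarith [h3, h1]
      have hmin : F xg ≤ F (c • xg + d • xstar) := hxg (Set.mem_univ _)
      have : F xg ≤ c * F xg + d * F xstar - c * d * K := le_trans hmin hFmix
      have e : c * F xg = F xg - d * F xg := by rw [hc]; ring
      rw [e] at this
      have h6 : d * (F xg + c * K) ≤ d * F xstar := by nlinarith [this]
      exact le_of_mul_le_mul_left h6 hd0
    have keyKK : F xg + K ≤ F xstar := by
      rcases eq_or_lt_of_le hKnn with hK0 | hKpos
      · have := key 1 one_pos le_rfl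
        simpa [← hK0] using this
      · refine le_of_forall_pos_le_add fun ε hε => ?_
        have hdpos : 0 < min 1 (ε / K) := lt_min one_pos (by positivity)
        have hdle : min 1 (ε / K) ≤ 1 := min_le_left _ _
        have h := key _ hdpos hdle
        have : min 1 (ε / K) * K ≤ ε := by
          calc min 1 (ε / K) * K ≤ (ε / K) * K :=
                mul_le_mul_of_nonneg_right (min_le_right _ _) hKnn
            _ = ε := div_mul_cancel₀ _ (ne_of_gt hKpos)
        nlinarith
    have hnorm : ‖xg - xstar‖ = ‖xstar - xg‖ := norm_sub_rev _ _
    rw [hK, hnorm] at keyKK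
    exact keyKK
  -- Step C : F xstar ≤ f xstar + γδ/(4α)
  have keyC : F xstar ≤ f xstar + γ * δ / (4 * α) := by
    have hxs : ∀ i, ⟪a i, xstar⟫ ≤ b i := by rw [hX] at hxstarX; exact hxstarX
    have hone : ∀ i : Fin m, huber δ (a i) (b i) xstar ≤ δ / (4 * α) := by
      intro i
      rw [huber_eq_hub]
      have h1 : hub δ (⟪a i, xstar⟫ - b i) ≤ δ / 4 :=
        hub_le_of_nonpos hδ (by linarith [hxs i])
      have hna : (0:ℝ) < ‖a i‖ := norm_pos_iff.2 (ha i)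
      calc hub δ (⟪a i, xstar⟫ - b i) / ‖a i‖ ≤ (δ / 4) / ‖a i‖ := by gcongr
        _ ≤ (δ / 4) / α := div_le_div_of_nonneg_left (by positivity) hα_pos (hα_le i)
        _ = δ / (4 * α) := by rw [div_div]
    have hsum : ∑ i, huber δ (a i) (b i) xstar ≤ m * (δ / (4 * α)) := by
      calc ∑ i, huber δ (a i) (b i) xstar ≤ ∑ _i : Fin m, δ / (4 * α) :=
            Finset.sum_le_sum fun i _ => hone i
        _ = m * (δ / (4 * α)) := by
            rw [Finset.sum_const, Finset.card_univ, Fintype.card_fin, nsmul_eq_mul]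
    have hγm : 0 ≤ γ / m := by positivity
    have h7 := mul_le_mul_of_nonneg_left hsum hγm
    have heq : γ / m * (m * (δ / (4 * α))) = γ * δ / (4 * α) := by
      field_simp
    rw [heq] at h7
    simp only [hF]
    linarith [h7]
  -- Step D : f xstar ≤ F xg
  have keyD : f xstar ≤ F xg := by
    -- d1 : ‖xg - p‖ ≤ infDist xg X
    have hd1 : ‖xg - p‖ ≤ Metric.infDist xg X := by
      rw [Metric.infDist_eq_iInf]
      haveI : Nonempty X := hXne.to_subtype
      refine le_ciInf fun y => ?_
      rw [dist_eq_norm]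
      exact hproj y y.2
    -- d2 : infDist to each halfspace is at most the huber penalty
    have hd2 : ∀ i : Fin m, Metric.infDist xg {y : EuclideanSpace ℝ (Fin n) | ⟪a i, y⟫ ≤ b i}
        ≤ huber δ (a i) (b i) xg := by
      intro i
      set t : ℝ := ⟪a i, xg⟫ - b i with ht
      have hna : (0:ℝ) < ‖a i‖ := norm_pos_iff.2 (ha i)
      set y : EuclideanSpace ℝ (Fin n) := xg - (max t 0 / ‖a i‖ ^ 2) • a i with hy
      have hymem : y ∈ {y : EuclideanSpace ℝ (Fin n) | ⟪a i, y⟫ ≤ b i} := by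
        simp only [hy, Set.mem_setOf_eq, inner_sub_right, real_inner_smul_right]
        rw [real_inner_self_eq_norm_sq]
        have : max t 0 / ‖a i‖ ^ 2 * ‖a i‖ ^ 2 = max t 0 := by
          field_simp
        rw [this]
        have := le_max_left t 0
        simp only [ht] at this ⊢
        linarith
      calc Metric.infDist xg {y : EuclideanSpace ℝ (Fin n) | ⟪a i, y⟫ ≤ b i}
          ≤ dist xg y := Metric.infDist_le_dist_of_mem hymem
        _ = max t 0 / ‖a i‖ := by
            rw [dist_eq_norm, hy]
            have : xg - (xg - (max t 0 / ‖a i‖ ^ 2) • a i) = (max t 0 / ‖a i‖ ^ 2) • a i := by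
              abel
            rw [this, norm_smul]
            rw [Real.norm_eq_abs, abs_of_nonneg (by positivity)]
            field_simp
        _ ≤ hub δ t / ‖a i‖ := by
            gcongr
            exact max_le (le_hub hδ t) (hub_nonneg hδ t)
        _ = huber δ (a i) (b i) xg := (huber_eq_hub δ (a i) (b i) xg).symm
    have hd2' : ‖xg - p‖ ≤ β * ∑ i, huber δ (a i) (b i) xg := by
      calc ‖xg - p‖ ≤ Metric.infDist xg X := hd1
        _ ≤ β * ∑ i, Metric.infDist xg {y : EuclideanSpace ℝ (Fin n) | ⟪a i, y⟫ ≤ b i} :=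
            hHoffman xg
        _ ≤ β * ∑ i, huber δ (a i) (b i) xg := by
            apply mul_le_mul_of_nonneg_left _ (le_of_lt hβ)
            exact Finset.sum_le_sum fun i _ => hd2 i
    -- d3 : mean value bound
    have hd3 : f p - f xg ≤ L * ‖xg - p‖ := by
      have hmv : ‖f p - f xg‖ ≤ L * ‖p - xg‖ := by
        refine (convex_segment xg p).norm_image_sub_le_of_norm_fderiv_le
          (fun x _ => hdf.differentiableAt) (fun x hx => ?_)
          (left_mem_segment ℝ xg p) (right_mem_segment ℝ xg p)
        have hg : ‖gradient f x‖ = ‖fderiv ℝ f x‖ := by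
          unfold gradient
          exact (InnerProductSpace.toDual ℝ _).symm.norm_map _
        rw [← hg]
        exact hLbound x hx
      rw [norm_sub_rev p xg] at hmv
      calc f p - f xg ≤ ‖f p - f xg‖ := le_abs_self _
        _ ≤ L * ‖xg - p‖ := hmv
    -- d4 : f xstar ≤ f p
    have hd4 : f xstar ≤ f p := hxstar hpX
    -- combine
    have hsum_nn : 0 ≤ ∑ i, huber δ (a i) (b i) xg := by
      apply Finset.sum_nonneg
      intro i _
      rw [huber_eq_hub]
      exact div_nonneg (hub_nonneg hδ _) (norm_nonneg _)
    have hγm4 : 4 * β * L ≤ γ / m := by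
      rw [le_div_iff₀ hm0]
      nlinarith
    have hpen : 4 * L * ‖xg - p‖ ≤ (γ / m) * ∑ i, huber δ (a i) (b i) xg := by
      have h1 : (4 * β * L) * ∑ i, huber δ (a i) (b i) xg ≤
          (γ / m) * ∑ i, huber δ (a i) (b i) xg :=
        mul_le_mul_of_nonneg_right hγm4 hsum_nn
      have h2 : 4 * L * ‖xg - p‖ ≤ (4 * β * L) * ∑ i, huber δ (a i) (b i) xg := by
        nlinarith [mul_le_mul_of_nonneg_left hd2' (by positivity : (0:ℝ) ≤ 4 * L)]
      linarith
    have hnp : 0 ≤ ‖xg - p‖ := norm_nonneg _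
    simp only [hF]
    linarith [hpen, hd3, hd4, mul_nonneg hL.le hnp]
  -- final combination
  have hfinal : μ / 2 * ‖xstar - xg‖ ^ 2 ≤ γ * δ / (4 * α) := by linarith
  rw [le_div_iff₀ (by positivity : (0:ℝ) < 2 * μ * α)]
  have h5 := mul_le_mul_of_nonneg_right hfinal (by positivity : (0:ℝ) ≤ 4 * α)
  rw [div_mul_cancel₀ _ (by positivity : (4 * α : ℝ) ≠ 0)] at h5
  calc ‖xstar - xg‖ ^ 2 * (2 * μ * α) = μ / 2 * ‖xstar - xg‖ ^ 2 * (4 * α) := by ring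
    _ ≤ γ * δ := h5
end

section
/- (Chung's lemma) Let {u_k} be a nonnegative real sequence, let 0 < s ≤ 1, a > 0, t > 0, C > 0 and k_0 ∈ ℕ be such that u_{k+1} ≤ (1 − a/k^s) u_k + C/k^{s+t} for all k > k_0, and assume additionally that a > t in the case s = 1. Then there exists a constant C' > 0 such that u_k ≤ C'/k^t for all k ≥ 1. -/
open Real Filter

/-- Key elementary inequality: `1/x^t - t/x^(t+1) ≤ 1/(x+1)^t` for `x ≥ 1`, `t > 0`. -/
lemma chung_key {t : ℝ} (ht : 0 < t) {x : ℝ} (hx : 1 ≤ x) :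
    1 / x ^ t - t / x ^ (t + 1) ≤ 1 / (x + 1) ^ t := by
  have hx0 : (0:ℝ) < x := lt_of_lt_of_le one_pos hx
  have hx1 : (0:ℝ) < x + 1 := by linarith
  have hxt : (0:ℝ) < x ^ t := Real.rpow_pos_of_pos hx0 t
  have hx1t : (0:ℝ) < (x + 1) ^ t := Real.rpow_pos_of_pos hx1 t
  have het1 : x ^ (t + 1) = x ^ t * x := by
    rw [Real.rpow_add hx0, Real.rpow_one]
  have hdiv : (x / (x + 1)) ^ t = x ^ t / (x + 1) ^ t :=
    Real.div_rpow hx0.le hx1.le t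
  have hmain : 1 - t / x ≤ x ^ t / (x + 1) ^ t := by
    rcases le_total t 1 with htle | htge
    · -- use (1 + 1/x)^t ≤ 1 + t/x
      have h0x : (0:ℝ) ≤ 1 / x := by positivity
      have hb : (1 + 1 / x) ^ t ≤ 1 + t * (1 / x) :=
        rpow_one_add_le_one_add_mul_self (by linarith) ht.le htle
      have h1x : (0:ℝ) < 1 + 1 / x := by positivity
      have h1tx : (0:ℝ) < 1 + t * (1 / x) := by positivity
      have hid : (x / (x + 1)) = (1 + 1 / x)⁻¹ := by
        field_simp
      have hpow : (x / (x + 1)) ^ t = ((1 + 1 / x) ^ t)⁻¹ := by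
        rw [hid, ← Real.rpow_neg_one (1 + 1 / x), ← Real.rpow_mul h1x.le,
          neg_one_mul, Real.rpow_neg h1x.le]
      have h2 : (1 + t * (1 / x))⁻¹ ≤ ((1 + 1 / x) ^ t)⁻¹ :=
        inv_anti₀ (Real.rpow_pos_of_pos h1x t) hb
      have h3 : 1 - t / x ≤ 1 / (1 + t * (1 / x)) := by
        rw [le_div_iff₀ h1tx]
        have h1 : t / x = t * (1 / x) := by ring
        nlinarith [sq_nonneg (t * (1 / x))]
      rw [one_div] at h3
      calc 1 - t / x ≤ (1 + t * (1 / x))⁻¹ := h3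
        _ ≤ ((1 + 1 / x) ^ t)⁻¹ := h2
        _ = (x / (x + 1)) ^ t := hpow.symm
        _ = x ^ t / (x + 1) ^ t := hdiv
    · -- Bernoulli with exponent t ≥ 1
      have hle1 : 1 / (x + 1) ≤ 1 := by
        rw [div_le_one hx1]; linarith
      have hb : 1 + t * (-(1 / (x + 1))) ≤ (1 + -(1 / (x + 1))) ^ t :=
        one_add_mul_self_le_rpow_one_add (by linarith) htge
      have hid : 1 + -(1 / (x + 1)) = x / (x + 1) := by field_simp; ring
      have h4 : t / (x + 1) ≤ t / x :=
        div_le_div_of_nonneg_left ht.le hx0 (by linarith)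
      calc 1 - t / x ≤ 1 - t / (x + 1) := by linarith
        _ = 1 + t * (-(1 / (x + 1))) := by ring
        _ ≤ (1 + -(1 / (x + 1))) ^ t := hb
        _ = (x / (x + 1)) ^ t := by rw [hid]
        _ = x ^ t / (x + 1) ^ t := hdiv
  -- finish
  have hfin : (1 - t / x) / x ^ t ≤ (x ^ t / (x + 1) ^ t) / x ^ t :=
    div_le_div_of_nonneg_right hmain hxt.le
  have e1 : 1 / x ^ t - t / x ^ (t + 1) = (1 - t / x) / x ^ t := by
    rw [het1, mul_comm (x ^ t) x, sub_div, div_div]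
  have e2 : (x ^ t / (x + 1) ^ t) / x ^ t = 1 / (x + 1) ^ t := by
    field_simp
  rw [e1, ← e2]; exact hfin

/-- Pure arithmetic step used in the induction. -/
lemma chung_arith {A B x a C C' t : ℝ} (hA : 0 < A) (hB : 0 < B) (hx : 0 < x)
    (h : C * x + C' * t * A ≤ a * C' * x) :
    (1 - a / A) * (C' / B) + C / (A * B) ≤ C' / B - C' * t / (B * x) := by
  have key : C' / B - C' * t / (B * x) - ((1 - a / A) * (C' / B) + C / (A * B))
      = (a * C' * x - C * x - C' * t * A) / (A * B * x) := by
    field_simp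
    ring
  have hnn : 0 ≤ (a * C' * x - C * x - C' * t * A) / (A * B * x) :=
    div_nonneg (by linarith) (by positivity)
  linarith [key ▸ hnn]

set_option maxHeartbeats 1000000 in
/-- Chung's lemma: if a nonnegative sequence satisfies
`u_{k+1} ≤ (1 − a/k^s) u_k + C/k^{s+t}` for all `k > k₀` (with `0 < s ≤ 1`, `a > 0`, `t > 0`,
`C > 0`, and `a > t` in the case `s = 1`), then `u_k = O(1/k^t)`. -/
theorem chung_lemma (u : ℕ → ℝ) (hu : ∀ k, 0 ≤ u k) (s a t C : ℝ) (k₀ : ℕ)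
    (hs : 0 < s) (hs1 : s ≤ 1) (ha : 0 < a) (ht : 0 < t) (hC : 0 < C)
    (hcase : s = 1 → t < a)
    (hrec : ∀ k : ℕ, k₀ < k → u (k + 1) ≤ (1 - a / (k : ℝ) ^ s) * u k + C / (k : ℝ) ^ (s + t)) :
    ∃ C' > 0, ∀ k : ℕ, 1 ≤ k → u k ≤ C' / (k : ℝ) ^ t := by
  -- Step 1: find `δ > 0` and `N` with `t * k ^ (s-1) ≤ a - δ` for `k ≥ N`, `k ≥ 1`.
  obtain ⟨δ, hδ, N, hN⟩ :
      ∃ δ > 0, ∃ N : ℕ, ∀ k : ℕ, N ≤ k → 1 ≤ k → t * (k : ℝ) ^ (s - 1) ≤ a - δ := by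
    rcases eq_or_lt_of_le hs1 with h1 | h1
    · refine ⟨(a - t) / 2, by linarith [hcase h1], 1, fun k hk hk1 => ?_⟩
      have hk0 : (0:ℝ) < (k:ℝ) := by exact_mod_cast hk1
      rw [h1]
      simp only [sub_self, Real.rpow_zero, mul_one]
      linarith [hcase h1]
    · have htend : Filter.Tendsto (fun k : ℕ => t * (k : ℝ) ^ (s - 1)) Filter.atTop (nhds 0) := by
        have h0 : Filter.Tendsto (fun x : ℝ => x ^ (-(1 - s))) Filter.atTop (nhds 0) :=
          tendsto_rpow_neg_atTop (by linarith)
        have h2 := (h0.comp tendsto_natCast_atTop_atTop).const_mul t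
        simpa [mul_zero] using h2.congr (fun k => by rw [Function.comp]; ring_nf)
      have hev : ∀ᶠ k : ℕ in Filter.atTop, t * (k : ℝ) ^ (s - 1) < a / 2 :=
        htend.eventually (gt_mem_nhds (by linarith))
      obtain ⟨N, hN⟩ := Filter.eventually_atTop.1 hev
      exact ⟨a / 2, by linarith, N, fun k hk _ => by linarith [hN k hk]⟩
  -- Step 2: find `N₂` with `a ≤ k ^ s` for `k ≥ N₂`.
  obtain ⟨N₂, hN₂⟩ : ∃ N₂ : ℕ, ∀ k : ℕ, N₂ ≤ k → a ≤ (k : ℝ) ^ s := by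
    have htend : Filter.Tendsto (fun k : ℕ => (k : ℝ) ^ s) Filter.atTop Filter.atTop :=
      (tendsto_rpow_atTop hs).comp tendsto_natCast_atTop_atTop
    exact Filter.eventually_atTop.1 (htend.eventually_ge_atTop a)
  set K : ℕ := max (max N N₂) (k₀ + 1) with hK
  set M : ℝ := ∑ k ∈ Finset.range (K + 2), u k * (k : ℝ) ^ t with hM
  have hM0 : 0 ≤ M := Finset.sum_nonneg fun k _ => by
    have : (0:ℝ) ≤ (k : ℝ) ^ t := Real.rpow_nonneg (Nat.cast_nonneg k) t
    exact mul_nonneg (hu k) this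
  set C' : ℝ := M + C / δ + 1 with hC'
  have hCδ : 0 < C / δ := div_pos hC hδ
  have hC'0 : 0 < C' := by positivity
  have hC'div : C ≤ C' * δ := by
    have h1 : C / δ ≤ C' := by simp only [hC']; linarith
    calc C = (C / δ) * δ := by field_simp
      _ ≤ C' * δ := mul_le_mul_of_nonneg_right h1 hδ.le
  -- Base bound for all `1 ≤ k ≤ K + 1`.
  have hbase : ∀ k : ℕ, 1 ≤ k → k ≤ K + 1 → u k ≤ C' / (k : ℝ) ^ t := by
    intro k hk1 hkK
    have hk0 : (0:ℝ) < (k : ℝ) := by exact_mod_cast hk1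
    have hkt : (0:ℝ) < (k : ℝ) ^ t := Real.rpow_pos_of_pos hk0 t
    rw [le_div_iff₀ hkt]
    have hmem : k ∈ Finset.range (K + 2) := Finset.mem_range.2 (by omega)
    have hsum : u k * (k : ℝ) ^ t ≤ M := Finset.single_le_sum
      (f := fun k => u k * (k : ℝ) ^ t)
      (fun i _ => mul_nonneg (hu i) (Real.rpow_nonneg (Nat.cast_nonneg i) t)) hmem
    simp only [hC']; linarith
  -- Inductive step for `k ≥ K + 1`.
  have hmain : ∀ k : ℕ, K + 1 ≤ k → u k ≤ C' / (k : ℝ) ^ t := by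
    intro k hk
    induction k, hk using Nat.le_induction with
    | base => exact hbase (K + 1) (by omega) le_rfl
    | succ j hj ih =>
      have hj1 : 1 ≤ j := by omega
      set x : ℝ := (j : ℝ) with hxdef
      have hx1 : (1:ℝ) ≤ x := by rw [hxdef]; exact_mod_cast hj1
      have hx0 : (0:ℝ) < x := by linarith
      have hxs : (0:ℝ) < x ^ s := Real.rpow_pos_of_pos hx0 s
      have hxt : (0:ℝ) < x ^ t := Real.rpow_pos_of_pos hx0 t
      have hxst : (0:ℝ) < x ^ (s + t) := Real.rpow_pos_of_pos hx0 (s + t)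
      have hx1t : (0:ℝ) < (x + 1) ^ t := Real.rpow_pos_of_pos (by linarith) t
      have hrec' := hrec j (by omega)
      have haxs : a ≤ x ^ s := hN₂ j (by omega)
      have hfac : 0 ≤ 1 - a / x ^ s := by
        have : a / x ^ s ≤ 1 := (div_le_one hxs).2 haxs
        linarith
      have h1 : u (j + 1) ≤ (1 - a / x ^ s) * (C' / x ^ t) + C / x ^ (s + t) := by
        have := mul_le_mul_of_nonneg_left ih hfac
        linarith
      -- core estimate
      have hNj : t * x ^ (s - 1) ≤ a - δ := hN j (by omega) hj1
      have hcore : C + C' * (t * x ^ (s - 1)) ≤ a * C' := by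
        have h2 : C' * (t * x ^ (s - 1)) ≤ C' * (a - δ) :=
          mul_le_mul_of_nonneg_left hNj hC'0.le
        nlinarith
      -- rpow identities
      have hes : x ^ (s + t) = x ^ s * x ^ t := Real.rpow_add hx0 s t
      have het1 : x ^ (t + 1) = x ^ t * x := by rw [Real.rpow_add hx0, Real.rpow_one]
      have hes1 : x ^ (s - 1) * x = x ^ s := by
        rw [← Real.rpow_one x, ← Real.rpow_mul hx0.le]
        rw [← Real.rpow_add hx0]
        norm_num
      -- from hcore : C * x + C' * t * x ^ s ≤ a * C' * x
      have hcore2 : C * x + C' * t * x ^ s ≤ a * C' * x := by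
        have := mul_le_mul_of_nonneg_right hcore hx0.le
        calc C * x + C' * t * x ^ s
            = (C + C' * (t * x ^ (s - 1))) * x := by rw [← hes1]; ring
          _ ≤ a * C' * x := by nlinarith
      -- show the target comparison
      have hkey := chung_key ht hx1
      have hgoal : (1 - a / x ^ s) * (C' / x ^ t) + C / x ^ (s + t) ≤ C' / (x + 1) ^ t := by
        have hstep1 : (1 - a / x ^ s) * (C' / x ^ t) + C / x ^ (s + t)
            ≤ C' / x ^ t - C' * t / x ^ (t + 1) := by
          rw [hes, het1]
          exact chung_arith hxs hxt hx0 hcore2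
        have hstep2 : C' / x ^ t - C' * t / x ^ (t + 1) ≤ C' / (x + 1) ^ t := by
          have := mul_le_mul_of_nonneg_left hkey hC'0.le
          calc C' / x ^ t - C' * t / x ^ (t + 1)
              = C' * (1 / x ^ t - t / x ^ (t + 1)) := by ring
            _ ≤ C' * (1 / (x + 1) ^ t) := mul_le_mul_of_nonneg_left hkey hC'0.le
            _ = C' / (x + 1) ^ t := by ring
        linarith
      have hcast : ((j + 1 : ℕ) : ℝ) = x + 1 := by push_cast; ring
      rw [hcast]
      linarith
  refine ⟨C', hC'0, fun k hk => ?_⟩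
  rcases le_or_gt k (K + 1) with h | h
  · exact hbase k hk h
  · exact hmain k (by omega)
end
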